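/- Let M be an n×n normal complex matrix with spectral decomposition M = Σᵢ τᵢ Pᵢ, where the τᵢ are the distinct eigenvalues and Pᵢ the orthogonal projections onto the eigenspaces. Then for any complex number c and any x not an eigenvalue of M, the characteristic polynomial satisfies det(M + cJ - xI) = det(M - xI) · (1 + c Σᵢ (𝟏ᵀ Pᵢ 𝟏)/(τᵢ - x)), where J is the all-ones matrix. -/

import Mathlib

open Matrix

theorem charpoly_rank_one_update {n s : ℕ} (M : Matrix (Fin n) (Fin n) ℂ)
    (τ : Fin s → ℂ) (P : Fin s → Matrix (Fin n) (Fin n) ℂ)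
    (hdecomp : M = ∑ i, τ i • P i)
    (hherm : ∀ i, (P i)ᴴ = P i)
    (hsum : ∑ i, P i = 1)
    (horth : ∀ i j, P i * P j = if i = j then P i else 0)
    (hdist : Function.Injective τ)
    (c x : ℂ) (hx : ∀ i, τ i ≠ x) :
    (M + c • Matrix.of (fun _ _ => (1 : ℂ)) - x • 1).det =
      (M - x • 1).det * (1 + c * ∑ i, (∑ a, ∑ b, P i a b) / (τ i - x)) := by
  set A : Matrix (Fin n) (Fin n) ℂ := M - x • 1 with hA
  set B : Matrix (Fin n) (Fin n) ℂ := ∑ i, (τ i - x)⁻¹ • P i with hB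
  have hAeq : A = ∑ i, (τ i - x) • P i := by
    rw [hA, hdecomp, ← hsum, Finset.smul_sum, ← Finset.sum_sub_distrib]
    congr 1; ext i; rw [sub_smul]
  have hAB : A * B = 1 := by
    rw [hAeq, hB, Finset.sum_mul_sum]
    have : ∀ i ∈ Finset.univ, ∀ j ∈ Finset.univ,
        ((τ i - x) • P i : Matrix (Fin n) (Fin n) ℂ) * ((τ j - x)⁻¹ • P j)
          = if i = j then P i else 0 := by
      intro i _ j _
      rw [Matrix.smul_mul, Matrix.mul_smul, horth, smul_smul]
      by_cases h : i = j
      · subst h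
        simp [mul_inv_cancel₀ (sub_ne_zero.mpr (hx i))]
      · simp [h]
    calc (∑ i, ∑ j, ((τ i - x) • P i : Matrix (Fin n) (Fin n) ℂ) * ((τ j - x)⁻¹ • P j))
        = ∑ i, ∑ j, (if i = j then P i else 0) := by
          exact Finset.sum_congr rfl fun i hi => Finset.sum_congr rfl fun j hj => this i hi j hj
      _ = ∑ i, P i := by
          refine Finset.sum_congr rfl fun i _ => ?_
          simp
      _ = 1 := hsum
  have hdetA : IsUnit A.det := by
    refine IsUnit.of_mul_eq_one B.det ?_
    rw [← det_mul, hAB, det_one]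
  -- the rank-one factor
  set u : Fin n → ℂ := fun a => c * ∑ k, B a k with hu
  set v : Fin n → ℂ := fun _ => (1 : ℂ) with hv
  have key : M + c • Matrix.of (fun _ _ => (1 : ℂ)) - x • 1
      = A * (1 + replicateCol Unit u * replicateRow Unit v) := by
    rw [Matrix.mul_add, Matrix.mul_one, ← Matrix.mul_assoc]
    have hcol : A * replicateCol Unit u = replicateCol Unit (fun a => c * (A *ᵥ (fun k => ∑ l, B k l)) a) := by
      ext a b
      simp [Matrix.mul_apply, hu, mulVec, dotProduct, Finset.mul_sum, mul_comm, mul_left_comm]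
    rw [hcol]
    have hAV : (A *ᵥ (fun k => ∑ l, B k l)) = fun a => ∑ l, (A * B) a l := by
      ext a
      rw [mulVec]
      simp only [Matrix.mul_apply, dotProduct]
      rw [Finset.sum_comm]
      exact Finset.sum_congr rfl fun l _ => Finset.mul_sum _ _ _
    rw [hAV, hAB]
    ext a b
    simp [Matrix.one_apply, hv, Matrix.mul_apply, Finset.sum_ite_eq, hA]
    ring
  rw [key, det_mul, det_one_add_replicateCol_mul_replicateRow]
  congr 1
  rw [hv, hu]
  simp only [dotProduct, one_mul]
  rw [← Finset.mul_sum]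
  congr 1
  rw [hB]
  simp only [Matrix.sum_apply, Matrix.smul_apply, smul_eq_mul]
  have swap1 : ∀ (f : Fin n → Fin n → Fin s → ℂ),
      ∑ a, ∑ k, ∑ i, f a k i = ∑ i, ∑ a, ∑ k, f a k i := by
    intro f
    calc ∑ a, ∑ k, ∑ i, f a k i = ∑ a, ∑ i, ∑ k, f a k i :=
          Finset.sum_congr rfl fun a _ => Finset.sum_comm
      _ = ∑ i, ∑ a, ∑ k, f a k i := Finset.sum_comm
  rw [swap1]
  congr 1
  apply Finset.sum_congr rfl
  intro i _
  rw [div_eq_mul_inv, mul_comm, Finset.mul_sum]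
  apply Finset.sum_congr rfl
  intro a _
  rw [Finset.mul_sum]
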